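/- Labelling commutes with substitution in first-order semantic labelling: for a term t, substitution σ : X → Terms, and valuation μ : X → M, lab^μ(tσ) = lab^{σ*μ}(t)[x ↦ lab^μ(σ(x))], i.e., the labelled version of tσ under μ equals the result of applying the substitution x ↦ lab^μ(σ(x)) to the labelling of t under the valuation σ*μ defined by (σ*μ)(x) = ⟦σ(x)⟧μ. -/
import Mathlib

inductive Term (F : Type) (X : Type) (ar : F → ℕ) : Type
  | var : X → Term F X ar
  | fn (f : F) (args : Fin (ar f) → Term F X ar) : Term F X ar

namespace Term
variable {F X : Type} {ar : F → ℕ}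

def subst (σ : X → Term F X ar) : Term F X ar → Term F X ar
  | var x => σ x
  | fn f ts => fn f (fun i => subst σ (ts i))

def eval {M : Type} (interp : ∀ f : F, (Fin (ar f) → M) → M) (μ : X → M) :
    Term F X ar → M
  | var x => μ x
  | fn f ts => interp f (fun i => eval interp μ (ts i))

def lab {M : Type} {S : F → Type} (interp : ∀ f : F, (Fin (ar f) → M) → M)
    (π : ∀ f : F, (Fin (ar f) → M) → S f) (μ : X → M) :
    Term F X ar → Term (Σ f : F, S f) X (fun p => ar p.1)
  | var x => var x
  | fn f ts => fn ⟨f, π f (fun i => eval interp μ (ts i))⟩ (fun i => lab interp π μ (ts i))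

end Term

theorem eval_subst {F X M : Type} {ar : F → ℕ}
    (interp : ∀ f : F, (Fin (ar f) → M) → M)
    (t : Term F X ar) (σ : X → Term F X ar) (μ : X → M) :
    Term.eval interp μ (Term.subst σ t) =
      Term.eval interp (fun x => Term.eval interp μ (σ x)) t := by
  induction t with
  | var x => rfl
  | fn f ts ih => simp [Term.subst, Term.eval, ih]

/-- Labelling commutes with substitution:
`lab^μ(tσ) = (lab^{σ*μ} t)[x ↦ lab^μ(σ x)]` where `(σ*μ)(x) = ⟦σ x⟧μ`. -/
theorem lab_subst {F X M : Type} {ar : F → ℕ} (S : F → Type)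
    (interp : ∀ f : F, (Fin (ar f) → M) → M)
    (π : ∀ f : F, (Fin (ar f) → M) → S f)
    (t : Term F X ar) (σ : X → Term F X ar) (μ : X → M) :
    Term.lab interp π μ (Term.subst σ t) =
      Term.subst (fun x => Term.lab interp π μ (σ x))
        (Term.lab interp π (fun x => Term.eval interp μ (σ x)) t) := by
  induction t with
  | var x => rfl
  | fn f ts ih =>
    simp [Term.subst, Term.lab, eval_subst, ih]
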